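/- After clearing denominators, the identity $(t^{\sum_i n_i}-1)\prod_{l=2}^N (t^{n_l}x_1 - t^{n_1}x_l) = (1-t^{-n_1})\,t^{\sum_i n_i}\prod_{l=2}^N (x_1 - t^{n_1}x_l) - t^{\sum_i n_i}\sum_{j=2}^N (1-t^{-n_j})(x_j - t^{n_j}x_1)\prod_{l=2,l\neq j}^N (t^{n_l}x_1 - t^{n_1}x_l)\frac{x_j - t^{n_j}x_l}{t^{n_l}x_j - t^{n_j}x_l}$ holds as an identity of rational functions in $x_1$. -/

import Mathlib

open Finset Polynomial

lemma lagrange_eval_form {F : Type*} [Field F] (s : Finset ℕ) (u c : ℕ → F)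
    (hu : Set.InjOn u s) (w : F) :
    ∏ l ∈ s, (w - c l) = (∏ l ∈ s, (w - u l))
      + ∑ j ∈ s, (∏ l ∈ s, (u j - c l)) * ∏ l ∈ s.erase j, ((w - u l) / (u j - u l)) := by
  classical
  set p : Polynomial F := ∏ l ∈ s, (X - C (c l)) with hp
  set q : Polynomial F := ∏ l ∈ s, (X - C (u l)) with hq
  have hpm : p.Monic := monic_prod_of_monic _ _ fun i _ => monic_X_sub_C _
  have hqm : q.Monic := monic_prod_of_monic _ _ fun i _ => monic_X_sub_C _
  have hpd : p.natDegree = s.card := by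
    rw [hp, natDegree_prod_of_monic _ _ fun i _ => monic_X_sub_C _]
    simp
  have hqd : q.natDegree = s.card := by
    rw [hq, natDegree_prod_of_monic _ _ fun i _ => monic_X_sub_C _]
    simp
  have hdeg : (p - q).degree < (s.card : ℕ) := by
    have := degree_sub_lt (p := p) (q := q) (by rw [degree_eq_natDegree hpm.ne_zero, degree_eq_natDegree hqm.ne_zero, hpd, hqd])
      hpm.ne_zero (by rw [hpm.leadingCoeff, hqm.leadingCoeff])
    rwa [degree_eq_natDegree hpm.ne_zero, hpd] at this
  have heq := Lagrange.eq_interpolate (v := u) hu hdeg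
  have := congrArg (Polynomial.eval w) heq
  rw [Lagrange.interpolate_apply] at this
  have hevalpq : ∀ z : F, Polynomial.eval z (p - q)
      = (∏ l ∈ s, (z - c l)) - ∏ l ∈ s, (z - u l) := by
    intro z; simp [hp, hq, eval_prod]
  have h0 : ∀ j ∈ s, (∏ l ∈ s, (u j - u l)) = 0 :=
    fun j hj => Finset.prod_eq_zero hj (sub_self _)
  rw [eval_finset_sum] at this
  have hterms : ∀ j ∈ s,
      Polynomial.eval w (C (Polynomial.eval (u j) (p - q)) * Lagrange.basis s u j)
      = (∏ l ∈ s, (u j - c l)) * ∏ l ∈ s.erase j, ((w - u l) / (u j - u l)) := by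
    intro j hj
    rw [eval_mul, eval_C, hevalpq, h0 j hj, sub_zero, Lagrange.basis, eval_prod]
    congr 1
    refine Finset.prod_congr rfl fun l hl => ?_
    rw [Lagrange.basisDivisor, eval_mul, eval_C, eval_sub, eval_X, eval_C, div_eq_inv_mul]
  rw [Finset.sum_congr rfl hterms, hevalpq w] at this
  linear_combination this

lemma core_identity {F : Type*} [Field F] (σ u : ℕ → F) :
    ∀ s : Finset ℕ, Set.InjOn u s →
      ∑ j ∈ s, (σ j - 1) * ∏ l ∈ s.erase j, ((u j - σ l * u l) / (u j - u l))
        = (∏ j ∈ s, σ j) - 1 := by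
  intro s
  induction s using Finset.induction_on with
  | empty => simp
  | @insert a s ha ih =>
    intro hu
    have hus : Set.InjOn u s := hu.mono (by simp [Finset.subset_insert])
    have hmem : ∀ j ∈ s, j ≠ a := fun j hj h => ha (h ▸ hj)
    have hne : ∀ j ∈ s, u j - u a ≠ 0 := by
      intro j hj
      refine sub_ne_zero.2 fun h => hmem j hj ?_
      exact hu (Finset.mem_insert_of_mem hj) (Finset.mem_insert_self a s) h
    have hne' : ∀ j ∈ s, u a - u j ≠ 0 := fun j hj => sub_ne_zero.2 (Ne.symm (sub_ne_zero.1 (hne j hj)))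
    set P : ℕ → F := fun j => ∏ l ∈ s.erase j, ((u j - σ l * u l) / (u j - u l)) with hP
    -- step A'': product formula for the new node
    have hQ : (∏ l ∈ s, (u a - u l)) ≠ 0 := Finset.prod_ne_zero_iff.2 fun l hl => hne' l hl
    have keyA : ∏ l ∈ s, ((u a - σ l * u l) / (u a - u l))
        = 1 + ∑ j ∈ s, ((u j - σ j * u j) / (u a - u j)) * P j := by
      rw [Finset.prod_div_distrib, lagrange_eval_form s u (fun l => σ l * u l) hus (u a),
        add_div, div_self hQ, Finset.sum_div]
      congr 1
      refine Finset.sum_congr rfl fun j hj => ?_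
      have h1 : ∏ l ∈ s, (u j - σ l * u l)
          = (u j - σ j * u j) * ∏ l ∈ s.erase j, (u j - σ l * u l) :=
        (Finset.mul_prod_erase s _ hj).symm
      have h2 : ∏ l ∈ s, (u a - u l) = (u a - u j) * ∏ l ∈ s.erase j, (u a - u l) :=
        (Finset.mul_prod_erase s _ hj).symm
      have h3 : ∏ l ∈ s.erase j, ((u a - u l) / (u j - u l))
          = (∏ l ∈ s.erase j, (u a - u l)) / (∏ l ∈ s.erase j, (u j - u l)) :=
        Finset.prod_div_distrib _ _
      have h4 : P j = (∏ l ∈ s.erase j, (u j - σ l * u l)) / (∏ l ∈ s.erase j, (u j - u l)) :=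
        Finset.prod_div_distrib _ _
      have hD : (∏ l ∈ s.erase j, (u j - u l)) ≠ 0 := by
        refine Finset.prod_ne_zero_iff.2 fun l hl => sub_ne_zero.2 fun h => ?_
        have := hu (Finset.mem_insert_of_mem hj) (Finset.mem_insert_of_mem (Finset.mem_of_mem_erase hl)) h
        exact (Finset.mem_erase.1 hl).1 this.symm
      have hC : (∏ l ∈ s.erase j, (u a - u l)) ≠ 0 :=
        Finset.prod_ne_zero_iff.2 fun l hl => hne' l (Finset.mem_of_mem_erase hl)
      have hE : u a - u j ≠ 0 := hne' j hj
      rw [h1, h2, h3, h4]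
      field_simp
    -- now the main computation
    rw [Finset.sum_insert ha, Finset.prod_insert ha, Finset.erase_insert ha]
    have hsum : ∀ j ∈ s,
        (σ j - 1) * ∏ l ∈ (insert a s).erase j, ((u j - σ l * u l) / (u j - u l))
        = (σ j - 1) * (((u j - σ a * u a) / (u j - u a)) * P j) := by
      intro j hj
      rw [Finset.erase_insert_of_ne (hmem j hj).symm, Finset.prod_insert (fun h => ha (Finset.mem_of_mem_erase h))]
    rw [Finset.sum_congr rfl hsum, keyA]
    have hterm : ∀ j ∈ s,
        (σ j - 1) * (((u j - σ a * u a) / (u j - u a)) * P j)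
          + (σ a - 1) * (((u j - σ j * u j) / (u a - u j)) * P j)
        = σ a * ((σ j - 1) * P j) := by
      intro j hj
      have h1 := hne j hj
      have h2 := hne' j hj
      field_simp
      ring
    have expand : (σ a - 1) * (1 + ∑ j ∈ s, ((u j - σ j * u j) / (u a - u j)) * P j)
          + ∑ j ∈ s, (σ j - 1) * (((u j - σ a * u a) / (u j - u a)) * P j)
        = (σ a - 1) + ∑ j ∈ s, σ a * ((σ j - 1) * P j) := by
      rw [mul_add, mul_one, Finset.mul_sum, add_assoc, ← Finset.sum_add_distrib]
      congr 1
      refine Finset.sum_congr rfl fun j hj => ?_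
      rw [← hterm j hj]; ring
    rw [expand, ← Finset.mul_sum, ih hus]
    ring

lemma main_generic {F : Type*} [Field F] (N : ℕ) (hN : 2 ≤ N) (σ x : ℕ → F) (y : F)
    (hσ : ∀ i ∈ Finset.Icc 1 N, σ i ≠ 0)
    (hden : ∀ j ∈ Finset.Icc 2 N, ∀ l ∈ Finset.Icc 2 N, j ≠ l → σ l * x j - σ j * x l ≠ 0)
    (hy : ∀ l ∈ Finset.Icc 2 N, σ l * y - σ 1 * x l ≠ 0) :
    ((∏ i ∈ Finset.Icc 1 N, σ i) - 1) * ∏ l ∈ Finset.Icc 2 N, (σ l * y - σ 1 * x l)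
      = (1 - (σ 1)⁻¹) * (∏ i ∈ Finset.Icc 1 N, σ i) * ∏ l ∈ Finset.Icc 2 N, (y - σ 1 * x l)
        - (∏ i ∈ Finset.Icc 1 N, σ i) *
            ∑ j ∈ Finset.Icc 2 N, (1 - (σ j)⁻¹) * (x j - σ j * y) *
              ∏ l ∈ (Finset.Icc 2 N).erase j,
                ((σ l * y - σ 1 * x l) * ((x j - σ j * x l) / (σ l * x j - σ j * x l))) := by
  classical
  have h12 : Finset.Icc 1 N = insert 1 (Finset.Icc 2 N) := by
    ext m
    simp only [Finset.mem_Icc, Finset.mem_insert]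
    omega
  have h1n : (1:ℕ) ∉ Finset.Icc 2 N := by simp
  have hmem2 : ∀ l ∈ Finset.Icc 2 N, l ∈ Finset.Icc 1 N ∧ l ≠ 1 := by
    intro l hl
    rw [Finset.mem_Icc] at hl ⊢
    omega
  set x' : ℕ → F := fun i => if i = 1 then y else x i with hx'
  set u : ℕ → F := fun i => x' i / σ i with hu
  have hx'1 : x' 1 = y := by simp [hx']
  have hx'2 : ∀ l, l ≠ 1 → x' l = x l := by intro l hl; simp [hx', hl]
  have hσ1 : σ 1 ≠ 0 := hσ 1 (by rw [Finset.mem_Icc]; omega)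
  have hpair : ∀ j ∈ Finset.Icc 1 N, ∀ l ∈ Finset.Icc 1 N, j ≠ l →
      σ l * x' j - σ j * x' l ≠ 0 := by
    intro j hj l hl hjl
    by_cases hj1 : j = 1
    · subst hj1
      have hl2 : l ∈ Finset.Icc 2 N := by
        rw [Finset.mem_Icc] at hl ⊢; omega
      rw [hx'1, hx'2 l (Ne.symm hjl)]
      exact hy l hl2
    · by_cases hl1 : l = 1
      · subst hl1
        have hj2 : j ∈ Finset.Icc 2 N := by
          rw [Finset.mem_Icc] at hj ⊢; omega
        rw [hx'1, hx'2 j hj1]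
        intro h
        exact hy j hj2 (by linear_combination -h)
      · have hj2 : j ∈ Finset.Icc 2 N := by rw [Finset.mem_Icc] at hj ⊢; omega
        have hl2 : l ∈ Finset.Icc 2 N := by rw [Finset.mem_Icc] at hl ⊢; omega
        rw [hx'2 j hj1, hx'2 l hl1]
        exact hden j hj2 l hl2 hjl
  have hu_inj : Set.InjOn u (Finset.Icc 1 N : Set ℕ) := by
    intro j hj l hl h
    by_contra hjl
    have hj' : j ∈ Finset.Icc 1 N := hj
    have hl' : l ∈ Finset.Icc 1 N := hl
    apply hpair j hj' l hl' hjl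
    have := (div_eq_div_iff (hσ j hj') (hσ l hl')).1 h
    linear_combination this
  have hc := core_identity σ u (Finset.Icc 1 N) hu_inj
  set g : ℕ → ℕ → F := fun j l => (x' j - σ j * x' l) / (σ l * x' j - σ j * x' l) with hg
  have hfrac : ∀ j ∈ Finset.Icc 1 N, ∀ l ∈ Finset.Icc 1 N, j ≠ l →
      (u j - σ l * u l) / (u j - u l) = σ l * g j l := by
    intro j hj l hl hjl
    have h0 := hpair j hj l hl hjl
    have hune : u j - u l ≠ 0 := by
      exact sub_ne_zero.2 fun h => hjl (hu_inj (Finset.mem_coe.2 hj) (Finset.mem_coe.2 hl) h)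
    have hσj := hσ j hj
    have hσl := hσ l hl
    have e1 : u j - σ l * u l = (x' j - σ j * x' l) / σ j := by
      rw [hu]; simp only; field_simp
    have e2 : u j - u l = (σ l * x' j - σ j * x' l) / (σ j * σ l) := by
      rw [hu]; simp only; field_simp
    rw [e1, e2, hg]
    simp only
    field_simp [h0]
  have hc' : ∑ j ∈ Finset.Icc 1 N, (σ j - 1) *
        ((∏ l ∈ (Finset.Icc 1 N).erase j, σ l) * ∏ l ∈ (Finset.Icc 1 N).erase j, g j l)
      = (∏ i ∈ Finset.Icc 1 N, σ i) - 1 := by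
    rw [← hc]
    refine Finset.sum_congr rfl fun j hj => ?_
    congr 1
    rw [← Finset.prod_mul_distrib]
    refine Finset.prod_congr rfl fun l hl => ?_
    exact (hfrac j hj l (Finset.mem_of_mem_erase hl) (Ne.symm (Finset.mem_erase.1 hl).1)).symm
  -- abbreviations
  set S := ∏ i ∈ Finset.Icc 1 N, σ i with hS
  set Pi0 := ∏ l ∈ Finset.Icc 2 N, (σ l * y - σ 1 * x l) with hPi0
  -- term for j = 1
  have e1 : (σ 1 - 1) * ((∏ l ∈ (Finset.Icc 1 N).erase 1, σ l) *
        ∏ l ∈ (Finset.Icc 1 N).erase 1, g 1 l) * Pi0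
      = (1 - (σ 1)⁻¹) * S * ∏ l ∈ Finset.Icc 2 N, (y - σ 1 * x l) := by
    have her : (Finset.Icc 1 N).erase 1 = Finset.Icc 2 N := by
      rw [h12, Finset.erase_insert h1n]
    rw [her]
    have hgp : (∏ l ∈ Finset.Icc 2 N, g 1 l) * Pi0 = ∏ l ∈ Finset.Icc 2 N, (y - σ 1 * x l) := by
      rw [hPi0, ← Finset.prod_mul_distrib]
      refine Finset.prod_congr rfl fun l hl => ?_
      have hl1 : l ≠ 1 := (hmem2 l hl).2
      rw [hg]; simp only
      rw [hx'1, hx'2 l hl1]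
      exact div_mul_cancel₀ _ (hy l hl)
    have hSs : S = σ 1 * ∏ l ∈ Finset.Icc 2 N, σ l := by
      rw [hS, h12, Finset.prod_insert h1n]
    calc (σ 1 - 1) * ((∏ l ∈ Finset.Icc 2 N, σ l) * ∏ l ∈ Finset.Icc 2 N, g 1 l) * Pi0
        = (σ 1 - 1) * (∏ l ∈ Finset.Icc 2 N, σ l) * ((∏ l ∈ Finset.Icc 2 N, g 1 l) * Pi0) := by ring
      _ = (σ 1 - 1) * (∏ l ∈ Finset.Icc 2 N, σ l) * ∏ l ∈ Finset.Icc 2 N, (y - σ 1 * x l) := by rw [hgp]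
      _ = (1 - (σ 1)⁻¹) * S * ∏ l ∈ Finset.Icc 2 N, (y - σ 1 * x l) := by
          rw [hSs]; field_simp
  -- terms for j ≥ 2
  have e2 : ∀ j ∈ Finset.Icc 2 N, (σ j - 1) * ((∏ l ∈ (Finset.Icc 1 N).erase j, σ l) *
        ∏ l ∈ (Finset.Icc 1 N).erase j, g j l) * Pi0
      = -(S * ((1 - (σ j)⁻¹) * (x j - σ j * y) *
          ∏ l ∈ (Finset.Icc 2 N).erase j,
            ((σ l * y - σ 1 * x l) * ((x j - σ j * x l) / (σ l * x j - σ j * x l))))) := by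
    intro j hj
    have hj1 : j ≠ 1 := (hmem2 j hj).2
    have hσj : σ j ≠ 0 := hσ j (hmem2 j hj).1
    have her : (Finset.Icc 1 N).erase j = insert 1 ((Finset.Icc 2 N).erase j) := by
      rw [h12, Finset.erase_insert_of_ne (Ne.symm hj1)]
    have h1e : (1:ℕ) ∉ (Finset.Icc 2 N).erase j := fun h => h1n (Finset.mem_of_mem_erase h)
    rw [her, Finset.prod_insert h1e, Finset.prod_insert h1e]
    have hPsplit : Pi0 = (σ j * y - σ 1 * x j) * ∏ l ∈ (Finset.Icc 2 N).erase j, (σ l * y - σ 1 * x l) :=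
      (Finset.mul_prod_erase _ _ hj).symm
    have hgprod : (∏ l ∈ (Finset.Icc 2 N).erase j, g j l) *
          (∏ l ∈ (Finset.Icc 2 N).erase j, (σ l * y - σ 1 * x l))
        = ∏ l ∈ (Finset.Icc 2 N).erase j,
            ((σ l * y - σ 1 * x l) * ((x j - σ j * x l) / (σ l * x j - σ j * x l))) := by
      rw [← Finset.prod_mul_distrib]
      refine Finset.prod_congr rfl fun l hl => ?_
      have hl1 : l ≠ 1 := (hmem2 l (Finset.mem_of_mem_erase hl)).2
      rw [hg]; simp only
      rw [hx'2 j hj1, hx'2 l hl1]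
      ring
    have hg1 : g j 1 = (x j - σ j * y) / (σ 1 * x j - σ j * y) := by
      rw [hg]; simp only
      rw [hx'1, hx'2 j hj1]
    have hd1 : σ 1 * x j - σ j * y ≠ 0 := by
      intro h
      exact hy j hj (by linear_combination -h)
    have hSs : S = σ 1 * (σ j * ∏ l ∈ (Finset.Icc 2 N).erase j, σ l) := by
      rw [hS, h12, Finset.prod_insert h1n, Finset.mul_prod_erase _ _ hj]
    rw [hPsplit, hg1]
    calc (σ j - 1) * ((σ 1 * ∏ l ∈ (Finset.Icc 2 N).erase j, σ l) *
            ((x j - σ j * y) / (σ 1 * x j - σ j * y) * ∏ l ∈ (Finset.Icc 2 N).erase j, g j l)) *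
          ((σ j * y - σ 1 * x j) * ∏ l ∈ (Finset.Icc 2 N).erase j, (σ l * y - σ 1 * x l))
        = ((σ j - 1) * (σ 1 * ∏ l ∈ (Finset.Icc 2 N).erase j, σ l) *
            ((x j - σ j * y) / (σ 1 * x j - σ j * y)) * (σ j * y - σ 1 * x j)) *
          ((∏ l ∈ (Finset.Icc 2 N).erase j, g j l) *
            ∏ l ∈ (Finset.Icc 2 N).erase j, (σ l * y - σ 1 * x l)) := by ring
      _ = -(S * ((1 - (σ j)⁻¹) * (x j - σ j * y))) *
          ((∏ l ∈ (Finset.Icc 2 N).erase j, g j l) *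
            ∏ l ∈ (Finset.Icc 2 N).erase j, (σ l * y - σ 1 * x l)) := by
          rw [hSs]; field_simp; ring
      _ = -(S * ((1 - (σ j)⁻¹) * (x j - σ j * y) *
          ∏ l ∈ (Finset.Icc 2 N).erase j,
            ((σ l * y - σ 1 * x l) * ((x j - σ j * x l) / (σ l * x j - σ j * x l))))) := by
          rw [hgprod]; ring
  -- assembly
  calc (S - 1) * Pi0
      = ∑ j ∈ Finset.Icc 1 N, (σ j - 1) * ((∏ l ∈ (Finset.Icc 1 N).erase j, σ l) *
          ∏ l ∈ (Finset.Icc 1 N).erase j, g j l) * Pi0 := by rw [← Finset.sum_mul, hc']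
    _ = (σ 1 - 1) * ((∏ l ∈ (Finset.Icc 1 N).erase 1, σ l) *
          ∏ l ∈ (Finset.Icc 1 N).erase 1, g 1 l) * Pi0
        + ∑ j ∈ Finset.Icc 2 N, (σ j - 1) * ((∏ l ∈ (Finset.Icc 1 N).erase j, σ l) *
          ∏ l ∈ (Finset.Icc 1 N).erase j, g j l) * Pi0 := by
        rw [h12, Finset.sum_insert h1n]
    _ = (1 - (σ 1)⁻¹) * S * ∏ l ∈ Finset.Icc 2 N, (y - σ 1 * x l)
        + ∑ j ∈ Finset.Icc 2 N, -(S * ((1 - (σ j)⁻¹) * (x j - σ j * y) *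
          ∏ l ∈ (Finset.Icc 2 N).erase j,
            ((σ l * y - σ 1 * x l) * ((x j - σ j * x l) / (σ l * x j - σ j * x l))))) := by
        rw [e1]; congr 1; exact Finset.sum_congr rfl e2
    _ = (1 - (σ 1)⁻¹) * S * ∏ l ∈ Finset.Icc 2 N, (y - σ 1 * x l)
        - S * ∑ j ∈ Finset.Icc 2 N, (1 - (σ j)⁻¹) * (x j - σ j * y) *
          ∏ l ∈ (Finset.Icc 2 N).erase j,
            ((σ l * y - σ 1 * x l) * ((x j - σ j * x l) / (σ l * x j - σ j * x l))) := by
        rw [Finset.sum_neg_distrib, ← Finset.mul_sum]; ring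

lemma main_poly {K : Type*} [Field K] (N : ℕ) (hN : 2 ≤ N) (σ x : ℕ → K)
    (hσ : ∀ i ∈ Finset.Icc 1 N, σ i ≠ 0)
    (hden : ∀ j ∈ Finset.Icc 2 N, ∀ l ∈ Finset.Icc 2 N, j ≠ l → σ l * x j - σ j * x l ≠ 0)
    (y : K) :
    ((∏ i ∈ Finset.Icc 1 N, σ i) - 1) * ∏ l ∈ Finset.Icc 2 N, (σ l * y - σ 1 * x l)
      = (1 - (σ 1)⁻¹) * (∏ i ∈ Finset.Icc 1 N, σ i) * ∏ l ∈ Finset.Icc 2 N, (y - σ 1 * x l)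
        - (∏ i ∈ Finset.Icc 1 N, σ i) *
            ∑ j ∈ Finset.Icc 2 N, (1 - (σ j)⁻¹) * (x j - σ j * y) *
              ∏ l ∈ (Finset.Icc 2 N).erase j,
                ((σ l * y - σ 1 * x l) * ((x j - σ j * x l) / (σ l * x j - σ j * x l))) := by
  classical
  set F := FractionRing (Polynomial K) with hF
  let ψ : Polynomial K →+* F := algebraMap (Polynomial K) F
  have hψ : Function.Injective ψ := IsFractionRing.injective _ _
  let φ : K →+* F := ψ.comp Polynomial.C
  have hφ : Function.Injective φ := hψ.comp Polynomial.C_injective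
  have hψC : ∀ a : K, ψ (C a) = φ a := fun a => rfl
  have hσ' : ∀ i ∈ Finset.Icc 1 N, φ (σ i) ≠ 0 :=
    fun i hi => (map_ne_zero_iff φ hφ).2 (hσ i hi)
  have hden' : ∀ j ∈ Finset.Icc 2 N, ∀ l ∈ Finset.Icc 2 N, j ≠ l →
      φ (σ l) * φ (x j) - φ (σ j) * φ (x l) ≠ 0 := by
    intro j hj l hl hjl
    rw [← map_mul, ← map_mul, ← map_sub]
    exact (map_ne_zero_iff φ hφ).2 (hden j hj l hl hjl)
  have hy' : ∀ l ∈ Finset.Icc 2 N, φ (σ l) * ψ X - φ (σ 1) * φ (x l) ≠ 0 := by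
    intro l hl
    have : φ (σ l) * ψ X - φ (σ 1) * φ (x l) = ψ (C (σ l) * X - C (σ 1) * C (x l)) := by
      rw [map_sub, map_mul, map_mul, hψC, hψC, hψC]
    rw [this]
    intro h
    have h2 : (C (σ l) * X - C (σ 1) * C (x l) : Polynomial K) = 0 :=
      hψ (by rw [h, map_zero])
    have h3 := congrArg (fun p : Polynomial K => p.coeff 1) h2
    simp [coeff_C] at h3
    have hl1 : l ∈ Finset.Icc 1 N := by rw [Finset.mem_Icc] at hl ⊢; omega
    exact hσ l hl1 h3
  have E := main_generic N hN (fun i => φ (σ i)) (fun i => φ (x i)) (ψ X) hσ' hden' hy'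
  set L : Polynomial K := (C (∏ i ∈ Finset.Icc 1 N, σ i) - 1) *
      ∏ l ∈ Finset.Icc 2 N, (C (σ l) * X - C (σ 1) * C (x l)) with hLdef
  set R : Polynomial K := (1 - C ((σ 1)⁻¹)) * C (∏ i ∈ Finset.Icc 1 N, σ i) *
        ∏ l ∈ Finset.Icc 2 N, (X - C (σ 1) * C (x l))
      - C (∏ i ∈ Finset.Icc 1 N, σ i) *
          ∑ j ∈ Finset.Icc 2 N, (1 - C ((σ j)⁻¹)) * (C (x j) - C (σ j) * X) *
            ∏ l ∈ (Finset.Icc 2 N).erase j,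
              ((C (σ l) * X - C (σ 1) * C (x l)) *
                C ((x j - σ j * x l) / (σ l * x j - σ j * x l))) with hRdef
  have hL : ψ L = ((∏ i ∈ Finset.Icc 1 N, φ (σ i)) - 1) *
      ∏ l ∈ Finset.Icc 2 N, (φ (σ l) * ψ X - φ (σ 1) * φ (x l)) := by
    rw [hLdef]
    simp only [map_mul, map_sub, map_one, map_prod, map_sum, hψC, map_prod φ]
  have hR : ψ R = (1 - (φ (σ 1))⁻¹) * (∏ i ∈ Finset.Icc 1 N, φ (σ i)) *
        ∏ l ∈ Finset.Icc 2 N, (ψ X - φ (σ 1) * φ (x l))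
      - (∏ i ∈ Finset.Icc 1 N, φ (σ i)) *
          ∑ j ∈ Finset.Icc 2 N, (1 - (φ (σ j))⁻¹) * (φ (x j) - φ (σ j) * ψ X) *
            ∏ l ∈ (Finset.Icc 2 N).erase j,
              ((φ (σ l) * ψ X - φ (σ 1) * φ (x l)) *
                ((φ (x j) - φ (σ j) * φ (x l)) / (φ (σ l) * φ (x j) - φ (σ j) * φ (x l)))) := by
    rw [hRdef]
    simp only [map_mul, map_sub, map_one, map_prod, map_sum, hψC, map_prod φ, map_inv₀, map_div₀]
  have hLR : L = R := hψ (by rw [hL, hR]; exact E)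
  have hev := congrArg (Polynomial.eval y) hLR
  rw [hLdef, hRdef] at hev
  simpa only [Polynomial.eval_mul, Polynomial.eval_sub, Polynomial.eval_add, Polynomial.eval_one,
    Polynomial.eval_C, Polynomial.eval_X, Polynomial.eval_prod, Polynomial.eval_finset_sum]
    using hev

theorem dell_identity_x65 {K : Type*} [Field K] (t : K) (ht : t ≠ 0)
    (N : ℕ) (hN : 2 ≤ N) (x : ℕ → K) (n : ℕ → ℤ)
    (hden : ∀ j ∈ Finset.Icc 2 N, ∀ l ∈ Finset.Icc 2 N, j ≠ l →
      t ^ (n l) * x j - t ^ (n j) * x l ≠ 0) :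
    ∀ y : K,
      (t ^ (∑ i ∈ Finset.Icc 1 N, n i) - 1) *
          ∏ l ∈ Finset.Icc 2 N, (t ^ (n l) * y - t ^ (n 1) * x l)
        = (1 - t ^ (-(n 1))) * t ^ (∑ i ∈ Finset.Icc 1 N, n i) *
            ∏ l ∈ Finset.Icc 2 N, (y - t ^ (n 1) * x l)
          - t ^ (∑ i ∈ Finset.Icc 1 N, n i) *
              ∑ j ∈ Finset.Icc 2 N, (1 - t ^ (-(n j))) * (x j - t ^ (n j) * y) *
                ∏ l ∈ (Finset.Icc 2 N).erase j,
                  (t ^ (n l) * y - t ^ (n 1) * x l) *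
                    ((x j - t ^ (n j) * x l) / (t ^ (n l) * x j - t ^ (n j) * x l)) := by
  intro y
  have hsum : ∀ s : Finset ℕ, t ^ (∑ i ∈ s, n i) = ∏ i ∈ s, t ^ (n i) := by
    intro s
    induction s using Finset.cons_induction with
    | empty => simp
    | cons a s ha ih => rw [Finset.sum_cons, Finset.prod_cons, zpow_add₀ ht, ih]
  simp only [hsum, zpow_neg]
  exact main_poly N hN (fun i => t ^ (n i)) x
    (fun i _ => zpow_ne_zero _ ht) hden y
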